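/- For all positive integers \(d, k\), the minimum blocking set sizes satisfy the recurrence \(\varphi_d(2k) \le \varphi_d(k) + \sum_{i=1}^{d-1} \binom{k}{i} \varphi_{d-i}(k)\). -/

import Mathlib

/-- A `d`-partition of a finite set `V`: `d` pairwise disjoint nonempty parts whose union is `V`. -/
def IsDPartition {α : Type*} [DecidableEq α] (d : ℕ) (V : Finset α)
    (P : Fin d → Finset α) : Prop :=
  (∀ i, (P i).Nonempty) ∧ (∀ i j, i ≠ j → Disjoint (P i) (P j)) ∧
    Finset.univ.biUnion P = V

/-- `E` is a `d`-blocking set on `V`: a family of `d`-element subsets of `V` such that every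
`d`-partition of `V` has a member of `E` meeting all parts. -/
def IsBlockingSet {α : Type*} [DecidableEq α] (d : ℕ) (V : Finset α)
    (E : Finset (Finset α)) : Prop :=
  (∀ e ∈ E, e ⊆ V ∧ e.card = d) ∧
  ∀ P : Fin d → Finset α, IsDPartition d V P → ∃ e ∈ E, ∀ i, (e ∩ P i).Nonempty

/-- `phi d n` is the minimum size of a `d`-blocking set on an `n`-element set. -/
noncomputable def phi (d n : ℕ) : ℕ :=
  sInf { m | ∃ E : Finset (Finset (Fin n)),
    IsBlockingSet d Finset.univ E ∧ E.card = m }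

open Finset

lemma blocking_image {α β : Type*} [DecidableEq α] [DecidableEq β]
    {d : ℕ} {V : Finset α} {E : Finset (Finset α)} (f : α → β)
    (hf : Set.InjOn f V) (h : IsBlockingSet d V E) :
    IsBlockingSet d (V.image f) (E.image (fun s => s.image f)) := by
  classical
  obtain ⟨h1, h2⟩ := h
  constructor
  · intro e he
    simp only [mem_image] at he
    obtain ⟨s, hs, rfl⟩ := he
    refine ⟨image_subset_image (h1 s hs).1, ?_⟩
    rw [card_image_of_injOn (hf.mono (by exact_mod_cast (h1 s hs).1)), (h1 s hs).2]
  · intro P hP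
    obtain ⟨hne, hdisj, huni⟩ := hP
    set Q : Fin d → Finset α := fun i => V.filter (fun x => f x ∈ P i) with hQ
    have hmemQ : ∀ i x, x ∈ Q i ↔ x ∈ V ∧ f x ∈ P i := by intro i x; simp [hQ]
    have hQpart : IsDPartition d V Q := by
      refine ⟨?_, ?_, ?_⟩
      · intro i
        obtain ⟨y, hy⟩ := hne i
        have : y ∈ V.image f := by
          rw [← huni]; exact mem_biUnion.mpr ⟨i, mem_univ i, hy⟩
        obtain ⟨x, hx, rfl⟩ := mem_image.mp this
        exact ⟨x, (hmemQ i x).mpr ⟨hx, hy⟩⟩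
      · intro i j hij
        rw [Finset.disjoint_left]
        intro x hx hx'
        exact (Finset.disjoint_left.mp (hdisj i j hij))
          ((hmemQ i x).mp hx).2 ((hmemQ j x).mp hx').2
      · ext x
        simp only [mem_biUnion, mem_univ, true_and]
        constructor
        · rintro ⟨i, hi⟩
          exact ((hmemQ i x).mp hi).1
        · intro hx
          have : f x ∈ V.image f := mem_image_of_mem f hx
          rw [← huni] at this
          obtain ⟨i, _, hi⟩ := mem_biUnion.mp this
          exact ⟨i, (hmemQ i x).mpr ⟨hx, hi⟩⟩
    obtain ⟨s, hsE, hs⟩ := h2 Q hQpart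
    refine ⟨s.image f, mem_image_of_mem _ hsE, fun i => ?_⟩
    obtain ⟨x, hx⟩ := hs i
    rw [mem_inter] at hx
    exact ⟨f x, mem_inter.mpr ⟨mem_image_of_mem f hx.1, ((hmemQ i x).mp hx.2).2⟩⟩

lemma exists_blocking (d n : ℕ) :
    ∃ E : Finset (Finset (Fin n)), IsBlockingSet d Finset.univ E := by
  classical
  refine ⟨Finset.powersetCard d Finset.univ, ?_, ?_⟩
  · intro e he; rw [mem_powersetCard] at he; exact he
  · rintro P ⟨hne, hdisj, -⟩
    choose x hx using hne
    have hinj : Function.Injective x := by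
      intro i j hij
      by_contra h
      exact (Finset.disjoint_left.mp (hdisj i j h)) (hx i) (hij ▸ hx j)
    refine ⟨Finset.univ.image x, ?_,
      fun i => ⟨x i, mem_inter.mpr ⟨mem_image_of_mem x (mem_univ i), hx i⟩⟩⟩
    rw [mem_powersetCard]
    exact ⟨subset_univ _, by
      rw [Finset.card_image_of_injective _ hinj, Finset.card_univ, Fintype.card_fin]⟩

lemma phi_spec (d n : ℕ) : ∃ E : Finset (Finset (Fin n)),
    IsBlockingSet d Finset.univ E ∧ E.card = phi d n := by
  have hne : {m | ∃ E : Finset (Finset (Fin n)),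
      IsBlockingSet d Finset.univ E ∧ E.card = m}.Nonempty := by
    obtain ⟨E, hE⟩ := exists_blocking d n
    exact ⟨E.card, E, hE, rfl⟩
  obtain ⟨E, hE, hc⟩ := Nat.sInf_mem hne
  exact ⟨E, hE, hc⟩

lemma phi_le_card {α : Type*} [DecidableEq α] {d n : ℕ} {V : Finset α}
    {E : Finset (Finset α)} (hcard : V.card = n) (hn : 1 ≤ n)
    (h : IsBlockingSet d V E) : phi d n ≤ E.card := by
  classical
  have hnefin : Nonempty (Fin n) := ⟨⟨0, hn⟩⟩
  set f : α → Fin n := fun x =>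
    if hx : x ∈ V then Fin.cast hcard (V.equivFin ⟨x, hx⟩) else Classical.arbitrary _ with hfdef
  have hf : Set.InjOn f V := by
    intro x hx y hy hxy
    rw [Finset.mem_coe] at hx hy
    simp only [hfdef, dif_pos hx, dif_pos hy] at hxy
    have := V.equivFin.injective (Fin.cast_injective hcard hxy)
    exact Subtype.ext_iff.mp this
  have himg : V.image f = Finset.univ := by
    apply Finset.eq_univ_of_card
    rw [card_image_of_injOn hf, hcard, Fintype.card_fin]
  have hb := blocking_image f hf h
  rw [himg] at hb
  calc phi d n ≤ (E.image (fun s => s.image f)).card := Nat.sInf_le ⟨_, hb, rfl⟩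
    _ ≤ E.card := card_image_le

theorem phi_doubling_recurrence (d k : ℕ) (hd : 1 ≤ d) (hk : 1 ≤ k) :
    phi d (2 * k) ≤ phi d k + ∑ i ∈ Finset.Icc 1 (d - 1), k.choose i * phi (d - i) k := by
  classical
  choose optE hopt hoptcard using fun m => phi_spec m k
  set A : Finset (Fin k ⊕ Fin k) := univ.image Sum.inl with hA
  set B : Finset (Fin k ⊕ Fin k) := univ.image Sum.inr with hB
  have hAB : Disjoint A B := by
    rw [Finset.disjoint_left]
    rintro x hx hx'
    rw [hA, mem_image] at hx
    rw [hB, mem_image] at hx'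
    obtain ⟨a, -, rfl⟩ := hx
    obtain ⟨b, -, h⟩ := hx'
    cases h
  have hcover : ∀ x : Fin k ⊕ Fin k, x ∈ A ∨ x ∈ B := by
    rintro (a | b)
    · left; rw [hA, mem_image]; exact ⟨a, mem_univ a, rfl⟩
    · right; rw [hB, mem_image]; exact ⟨b, mem_univ b, rfl⟩
  have hBcard : B.card = k := by
    rw [hB, card_image_of_injective _ Sum.inr_injective, card_univ, Fintype.card_fin]
  set F : ℕ → Finset (Finset (Fin k ⊕ Fin k)) :=
    fun i => (optE (d - i)).image (fun s => s.image Sum.inl) with hF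
  have hFblock : ∀ i, IsBlockingSet (d - i) A (F i) := fun i =>
    blocking_image Sum.inl (Sum.inl_injective.injOn) (hopt (d - i))
  have hFcard : ∀ i, (F i).card ≤ phi (d - i) k := fun i =>
    le_trans card_image_le (le_of_eq (hoptcard (d - i)))
  set G := (Finset.range d).biUnion
      (fun i => (B.powersetCard i).biUnion (fun S => (F i).image (fun e => e ∪ S))) with hG
  have hGmem : ∀ e' ∈ G, e' ⊆ (univ : Finset (Fin k ⊕ Fin k)) ∧ e'.card = d := by
    intro e' he'
    simp only [hG, mem_biUnion, mem_range, mem_image] at he'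
    obtain ⟨i, hi, S, hS, e, he, rfl⟩ := he'
    rw [mem_powersetCard] at hS
    obtain ⟨heA, hecard⟩ := (hFblock i).1 e he
    refine ⟨subset_univ _, ?_⟩
    rw [card_union_of_disjoint (hAB.mono heA hS.1), hecard, hS.2,
      Nat.sub_add_cancel (le_of_lt hi)]
  have hGblock : IsBlockingSet d (univ : Finset (Fin k ⊕ Fin k)) G := by
    refine ⟨hGmem, ?_⟩
    rintro P ⟨hne, hdisj, huni⟩
    set Tc := univ.filter (fun j : Fin d => (P j ∩ A).Nonempty) with hTc
    set T := univ.filter (fun j : Fin d => ¬(P j ∩ A).Nonempty) with hT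
    set t := Tc.card with ht
    have htd : t ≤ d := by
      rw [ht]
      exact le_trans (card_filter_le _ _) (by simp)
    have ht1 : 1 ≤ t := by
      have hAne : (Sum.inl ⟨0, hk⟩ : Fin k ⊕ Fin k) ∈ A := by
        rw [hA, mem_image]; exact ⟨_, mem_univ _, rfl⟩
      have hmem : (Sum.inl ⟨0, hk⟩ : Fin k ⊕ Fin k) ∈ univ.biUnion P := by
        rw [huni]; exact mem_univ _
      obtain ⟨j, -, hj⟩ := mem_biUnion.mp hmem
      have : j ∈ Tc := by
        rw [hTc, mem_filter]
        exact ⟨mem_univ _, ⟨_, mem_inter.mpr ⟨hj, hAne⟩⟩⟩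
      exact card_pos.mpr ⟨j, this⟩
    set i := d - t with hidef
    have hdi : d - i = t := Nat.sub_sub_self htd
    have hilt : i < d := Nat.sub_lt hd ht1
    have σ' : Fin (d - i) ≃ {x // x ∈ Tc} := (finCongr hdi).trans Tc.equivFin.symm
    set Q : Fin (d - i) → Finset (Fin k ⊕ Fin k) :=
      fun m => P (σ' m).val ∩ A with hQ
    have hQpart : IsDPartition (d - i) A Q := by
      refine ⟨?_, ?_, ?_⟩
      · intro m
        have h2 := (σ' m).2
        exact (mem_filter.mp h2).2
      · intro m m' hmm
        have hne' : (σ' m).val ≠ (σ' m').val := by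
          intro hcontra
          exact hmm (σ'.injective (Subtype.ext hcontra))
        exact (hdisj _ _ hne').mono inter_subset_left inter_subset_left
      · ext x
        simp only [mem_biUnion, mem_univ, true_and]
        constructor
        · rintro ⟨m, hm⟩
          exact (mem_inter.mp hm).2
        · intro hx
          have hxu : x ∈ univ.biUnion P := by rw [huni]; exact mem_univ _
          obtain ⟨j, -, hj⟩ := mem_biUnion.mp hxu
          have hjTc : j ∈ Tc := by
            rw [hTc, mem_filter]
            exact ⟨mem_univ _, ⟨x, mem_inter.mpr ⟨hj, hx⟩⟩⟩
          refine ⟨σ'.symm ⟨j, hjTc⟩, ?_⟩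
          show x ∈ P ↑(σ' (σ'.symm ⟨j, hjTc⟩)) ∩ A
          rw [Equiv.apply_symm_apply]
          exact mem_inter.mpr ⟨hj, hx⟩
    obtain ⟨e, heF, he⟩ := (hFblock i).2 Q hQpart
    have hTsubB : ∀ j ∈ T, P j ⊆ B := by
      intro j hj x hx
      rw [hT, mem_filter] at hj
      rcases hcover x with hxA | hxB
      · exact absurd ⟨x, mem_inter.mpr ⟨hx, hxA⟩⟩ hj.2
      · exact hxB
    choose b hb using fun j : ↥T => hne j.val
    set S := T.attach.image (fun j => b j) with hS
    have hTcard : T.card = i := by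
      have hsum := Finset.card_filter_add_card_filter_not
        (s := (univ : Finset (Fin d))) (p := fun j : Fin d => (P j ∩ A).Nonempty)
      rw [← hTc, ← hT, card_univ, Fintype.card_fin, ← ht] at hsum
      omega
    have hScard : S.card = i := by
      rw [hS, card_image_of_injOn, card_attach, hTcard]
      intro x hx y hy hxy
      by_contra hne'
      have hvne : x.val ≠ y.val := fun h => hne' (Subtype.ext h)
      have hbe : b x = b y := hxy
      exact (Finset.disjoint_left.mp (hdisj _ _ hvne)) (hb x) (hbe ▸ hb y)
    have hSB : S ⊆ B := by
      intro x hx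
      rw [hS] at hx
      obtain ⟨j, -, rfl⟩ := mem_image.mp hx
      exact hTsubB j.val j.2 (hb j)
    have hmemG : e ∪ S ∈ G := by
      rw [hG, mem_biUnion]
      exact ⟨i, mem_range.mpr hilt, mem_biUnion.mpr ⟨S,
        mem_powersetCard.mpr ⟨hSB, hScard⟩, mem_image_of_mem _ heF⟩⟩
    refine ⟨e ∪ S, hmemG, fun j => ?_⟩
    by_cases hj : (P j ∩ A).Nonempty
    · have hjTc : j ∈ Tc := by
        rw [hTc, mem_filter]; exact ⟨mem_univ _, hj⟩
      obtain ⟨x, hx⟩ := he (σ'.symm ⟨j, hjTc⟩)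
      have hQeq : Q (σ'.symm ⟨j, hjTc⟩) = P j ∩ A := by
        show P ↑(σ' (σ'.symm ⟨j, hjTc⟩)) ∩ A = P j ∩ A
        rw [Equiv.apply_symm_apply]
      rw [hQeq, mem_inter, mem_inter] at hx
      exact ⟨x, mem_inter.mpr ⟨mem_union_left _ hx.1, hx.2.1⟩⟩
    · have hjT : j ∈ T := by
        rw [hT, mem_filter]; exact ⟨mem_univ _, hj⟩
      refine ⟨b ⟨j, hjT⟩, mem_inter.mpr ⟨mem_union_right _ ?_, hb ⟨j, hjT⟩⟩⟩
      rw [hS]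
      exact mem_image_of_mem _ (mem_attach _ _)
  have hGcard : G.card ≤ phi d k + ∑ i ∈ Finset.Icc 1 (d - 1), k.choose i * phi (d - i) k := by
    calc G.card
        ≤ ∑ i ∈ Finset.range d,
            ((B.powersetCard i).biUnion (fun S => (F i).image (fun e => e ∪ S))).card :=
          card_biUnion_le
      _ ≤ ∑ i ∈ Finset.range d, ∑ S ∈ B.powersetCard i, ((F i).image (fun e => e ∪ S)).card :=
          Finset.sum_le_sum (fun i _ => card_biUnion_le)
      _ ≤ ∑ i ∈ Finset.range d, ∑ S ∈ B.powersetCard i, phi (d - i) k :=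
          Finset.sum_le_sum (fun i _ => Finset.sum_le_sum
            (fun S _ => le_trans card_image_le (hFcard i)))
      _ = ∑ i ∈ Finset.range d, k.choose i * phi (d - i) k := by
          refine Finset.sum_congr rfl (fun i _ => ?_)
          rw [Finset.sum_const, smul_eq_mul, card_powersetCard, hBcard]
      _ = phi d k + ∑ i ∈ Finset.Icc 1 (d - 1), k.choose i * phi (d - i) k := by
          have hrange : Finset.range d = insert 0 (Finset.Icc 1 (d - 1)) := by
            ext x
            simp only [Finset.mem_range, Finset.mem_insert, Finset.mem_Icc]
            omega
          rw [hrange, Finset.sum_insert (by simp)]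
          simp
  have huc : (univ : Finset (Fin k ⊕ Fin k)).card = 2 * k := by
    rw [card_univ]
    simp only [Fintype.card_sum, Fintype.card_fin]
    ring
  exact le_trans (phi_le_card huc (by omega) hGblock) hGcard
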